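/- arXiv:1205.6844 — 2 statements merged into one kernel-verified Lean document; each statement's English description precedes it below -/
import Mathlib

section
/- Let m > 2 be a real conductivity exponent, let G be an ignition-type reaction term with threshold θ ∈ (0,1), let ε ∈ (0,θ), and let c > 0 and p be a solution of the travelling-wave problem with ε < p < 1 and p strictly increasing. Then for every x ∈ ℝ with p(x) ≤ θ one has p'(x) = (m−2)·c·(1 − (ε/p(x))^{1/(m−2)}). In particular p'(0) = (m−2)·c·(1 − (ε/θ)^{1/(m−2)}). -/
open Filter Set

/-- An ignition-type reaction term with threshold `θ`. -/
def Ignition (G : ℝ → ℝ) (θ : ℝ) : Prop :=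
  ContDiff ℝ 1 G ∧ 0 < θ ∧ θ < 1 ∧
  (∀ μ ∈ Set.Icc (0:ℝ) θ, G μ = 0) ∧
  (∀ μ ∈ Set.Ioo θ (1:ℝ), 0 < G μ) ∧
  G 1 = 0 ∧ deriv G 1 < 0

/-- The travelling-wave problem: speed `c`, profile `p`. -/
def IsTW (m θ ε : ℝ) (G : ℝ → ℝ) (c : ℝ) (p : ℝ → ℝ) : Prop :=
  ContDiff ℝ 2 p ∧
  (∀ x : ℝ, -(p x) * deriv (deriv p) x
      + (c - deriv p x / (m - 2)) * deriv p x = G (p x)) ∧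
  Filter.Tendsto p Filter.atBot (nhds ε) ∧
  Filter.Tendsto p Filter.atTop (nhds 1) ∧
  p 0 = θ

theorem stmt1 (m θ ε c : ℝ) (G p : ℝ → ℝ) (hm : 2 < m)
    (hG : Ignition G θ) (hε : ε ∈ Set.Ioo 0 θ) (hc : 0 < c)
    (hp : IsTW m θ ε G c p)
    (hrange : ∀ x : ℝ, ε < p x ∧ p x < 1) (hmono : StrictMono p) :
    (∀ x : ℝ, p x ≤ θ →
      deriv p x = (m - 2) * c * (1 - (ε / p x) ^ (1 / (m - 2)))) ∧
    deriv p 0 = (m - 2) * c * (1 - (ε / θ) ^ (1 / (m - 2))) := by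
  obtain ⟨hp2, hODE, hbot, htop, hp0⟩ := hp
  obtain ⟨hGc, hθ0, hθ1, hG0, hGpos, hG1, hG1'⟩ := hG
  have hm2 : (0:ℝ) < m - 2 := by linarith
  set α : ℝ := 1 / (m - 2) with hα
  have hppos : ∀ x, 0 < p x := fun x => lt_trans hε.1 (hrange x).1
  -- differentiability facts
  have hp2' : ContDiff ℝ (1+1) p := by norm_num; exact hp2
  have hdiff : Differentiable ℝ p := hp2.differentiable (by norm_num)
  have hdiff2 : Differentiable ℝ (deriv p) :=
    ((contDiff_succ_iff_deriv.mp hp2').2.2).differentiable (by norm_num)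
  -- the first integral E
  set E : ℝ → ℝ := fun x => ((m - 2) * c - deriv p x) * (p x) ^ α with hE
  have hEderiv : ∀ x, p x ≤ θ → HasDerivAt E 0 x := by
    intro x hx
    have h1 : HasDerivAt p (deriv p x) x := (hdiff x).hasDerivAt
    have h2 : HasDerivAt (deriv p) (deriv (deriv p) x) x := (hdiff2 x).hasDerivAt
    have h3 : HasDerivAt (fun y => (p y) ^ α) (deriv p x * α * (p x) ^ (α - 1)) x :=
      h1.rpow_const (Or.inl (hppos x).ne')
    have h4 : HasDerivAt E
        ((0 - deriv (deriv p) x) * (p x) ^ α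
          + ((m - 2) * c - deriv p x) * (deriv p x * α * (p x) ^ (α - 1))) x :=
      (((hasDerivAt_const x ((m-2)*c)).sub h2).mul h3)
    have key : -(p x) * deriv (deriv p) x + (c - deriv p x / (m - 2)) * deriv p x = 0 := by
      rw [hODE x, hG0 (p x) ⟨(hppos x).le, hx⟩]
    have hsplit : (p x) ^ α = (p x) ^ (α - 1) * p x := by
      rw [← Real.rpow_add_one (hppos x).ne' (α - 1)]; norm_num
    have hinv : (m - 2) * (1 / (m - 2)) = 1 := by field_simp
    convert h4 using 1
    rw [hsplit, hα]
    linear_combination (-((p x) ^ (α - 1))) * key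
      + (-(c * deriv p x * (p x) ^ (α - 1))) * hinv
  -- constancy on (-∞, 0]
  have hle0 : ∀ x : ℝ, x ≤ 0 → p x ≤ θ := fun x hx => hp0 ▸ hmono.monotone hx
  have hconst : ∀ x : ℝ, x ≤ 0 → E 0 = E x := by
    intro x hx
    have := constant_of_has_deriv_right_zero (f := E) (a := x) (b := 0)
      (fun y hy => (hEderiv y (hle0 y hy.2)).continuousAt.continuousWithinAt)
      (fun y hy => (hEderiv y (hle0 y hy.2.le)).hasDerivWithinAt)
    exact this 0 ⟨hx, le_rfl⟩
  -- find points where deriv p is small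
  have hmvt : ∀ n : ℕ, ∃ ξ ∈ Ioo (-(n:ℝ) - 1) (-(n:ℝ)),
      deriv p ξ = (p (-(n:ℝ)) - p (-(n:ℝ) - 1)) / ((-(n:ℝ)) - (-(n:ℝ) - 1)) := by
    intro n
    have hab : -(n:ℝ) - 1 < -(n:ℝ) := by linarith
    obtain ⟨ξ, hξ, hval⟩ := exists_hasDerivAt_eq_slope p (deriv p) hab
      hdiff.continuous.continuousOn (fun y _ => (hdiff y).hasDerivAt)
    exact ⟨ξ, hξ, hval⟩
  choose ξ hξmem hξval using hmvt
  have hξle : ∀ n : ℕ, ξ n ≤ -(n:ℝ) := fun n => (hξmem n).2.le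
  have hξbot : Tendsto ξ atTop atBot := by
    apply tendsto_atBot_mono hξle
    exact tendsto_neg_atBot_iff.mpr tendsto_natCast_atTop_atTop
  have hnbot : Tendsto (fun n : ℕ => -(n:ℝ)) atTop atBot :=
    tendsto_neg_atBot_iff.mpr tendsto_natCast_atTop_atTop
  have hnbot' : Tendsto (fun n : ℕ => -(n:ℝ) - 1) atTop atBot :=
    tendsto_atBot_add_const_right _ _ hnbot
  have hdlim : Tendsto (fun n => deriv p (ξ n)) atTop (nhds 0) := by
    have h1 : Tendsto (fun n : ℕ => p (-(n:ℝ))) atTop (nhds ε) := hbot.comp hnbot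
    have h2 : Tendsto (fun n : ℕ => p (-(n:ℝ) - 1)) atTop (nhds ε) := hbot.comp hnbot'
    have : Tendsto (fun n : ℕ => (p (-(n:ℝ)) - p (-(n:ℝ) - 1)) / ((-(n:ℝ)) - (-(n:ℝ) - 1)))
        atTop (nhds 0) := by
      simp only [sub_sub_cancel]
      simpa using (h1.sub h2).div_const 1
    simpa only [← hξval] using this
  have hplim : Tendsto (fun n => p (ξ n)) atTop (nhds ε) := hbot.comp hξbot
  have hrlim : Tendsto (fun n => (p (ξ n)) ^ α) atTop (nhds (ε ^ α)) :=
    ((Real.continuousAt_rpow_const ε α (Or.inl hε.1.ne')).tendsto).comp hplim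
  have hElim : Tendsto (fun n => E (ξ n)) atTop (nhds (((m - 2) * c - 0) * ε ^ α)) :=
    ((tendsto_const_nhds.sub hdlim).mul hrlim)
  have hEconstseq : ∀ n : ℕ, E (ξ n) = E 0 := by
    intro n
    have : ξ n ≤ 0 := le_trans (hξle n) (neg_nonpos.mpr (Nat.cast_nonneg n))
    exact (hconst _ this).symm
  have hE0 : E 0 = (m - 2) * c * ε ^ α := by
    have : Tendsto (fun _ : ℕ => E 0) atTop (nhds (((m - 2) * c - 0) * ε ^ α)) := by
      simpa only [hEconstseq] using hElim
    have := tendsto_nhds_unique this tendsto_const_nhds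
    rw [← this]; ring
  -- main claim
  have main : ∀ x : ℝ, p x ≤ θ →
      deriv p x = (m - 2) * c * (1 - (ε / p x) ^ α) := by
    intro x hx
    have hx0 : x ≤ 0 := by
      by_contra h
      push_neg at h
      have := hmono h
      rw [hp0] at this
      linarith
    have hEx : ((m - 2) * c - deriv p x) * (p x) ^ α = (m - 2) * c * ε ^ α := by
      have := hconst x hx0
      rw [hE0] at this
      exact this.symm
    have hpow : (0:ℝ) < (p x) ^ α := Real.rpow_pos_of_pos (hppos x) α
    rw [Real.div_rpow hε.1.le (hppos x).le]
    field_simp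
    linear_combination -hEx
  exact ⟨main, by rw [← hp0]; exact main 0 (le_of_eq hp0)⟩
end

section
/- Let m > 2 be a real conductivity exponent, let G be an ignition-type reaction term with threshold θ ∈ (0,1), let ε ∈ (0,θ), and let c > 0 and p be a solution of the travelling-wave problem with ε < p < 1 and p strictly increasing. Then there exists a constant L > 0 such that p'(x)·e^{−c·x/ε} → L as x → −∞, and there exist M > 0 and x̄ ∈ ℝ such that 0 < p(x) − ε ≤ M·e^{c·x/ε} for all x ≤ x̄. -/
open Filter Set

set_option maxHeartbeats 2000000 in
theorem stmt2 (m θ ε c : ℝ) (G p : ℝ → ℝ) (hm : 2 < m)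
    (hG : Ignition G θ) (hε : ε ∈ Set.Ioo 0 θ) (hc : 0 < c)
    (hp : IsTW m θ ε G c p)
    (hrange : ∀ x : ℝ, ε < p x ∧ p x < 1) (hmono : StrictMono p) :
    (∃ L : ℝ, 0 < L ∧
      Filter.Tendsto (fun x : ℝ => deriv p x * Real.exp (-(c * x / ε)))
        Filter.atBot (nhds L)) ∧
    (∃ M : ℝ, 0 < M ∧ ∃ xbar : ℝ, ∀ x : ℝ, x ≤ xbar →
      0 < p x - ε ∧ p x - ε ≤ M * Real.exp (c * x / ε)) := by
  obtain ⟨hε0, hεθ⟩ := hε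
  obtain ⟨hGc, hθ0, hθ1, hGzero, hGpos, hG1, hG'⟩ := hG
  obtain ⟨hp2, hode, hbot, htop, hp0⟩ := hp
  have hm2 : (0:ℝ) < m - 2 := by linarith
  have hdp : Differentiable ℝ p := hp2.differentiable two_ne_zero
  have hch : ContDiff ℝ 1 (deriv p) := by
    have := (contDiff_succ_iff_deriv (n := 1)).mp (by exact_mod_cast hp2)
    exact this.2.2
  have hdh : Differentiable ℝ (deriv p) := hch.differentiable one_ne_zero
  have hppos : ∀ x, 0 < p x := fun x => hε0.trans (hrange x).1
  have hh0 : ∀ x, 0 ≤ deriv p x := by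
    intro x
    have H := (hdp x).hasDerivAt
    rw [hasDerivAt_iff_tendsto_slope] at H
    refine ge_of_tendsto H ?_
    filter_upwards [self_mem_nhdsWithin] with y hy
    rcases lt_or_gt_of_ne (Ne.symm (by exact hy : y ≠ x)) with h | h
    · rw [slope_def_field]
      apply div_nonneg
      · simp only [sub_nonneg]; exact (hmono h).le
      · linarith
    · rw [slope_def_field, div_nonneg_iff]
      right
      constructor
      · simp only [sub_nonpos]; exact (hmono h).le
      · linarith
  have hple : ∀ x ≤ (0:ℝ), p x ≤ θ := fun x hx => hp0 ▸ hmono.monotone hx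
  have hG0 : ∀ x ≤ (0:ℝ), G (p x) = 0 := fun x hx =>
    hGzero _ ⟨(hppos x).le, hple x hx⟩
  have hdd : ∀ x ≤ (0:ℝ), deriv (deriv p) x
      = (c - deriv p x / (m-2)) * deriv p x / p x := by
    intro x hx
    have h1 := hode x
    rw [hG0 x hx] at h1
    rw [eq_div_iff (ne_of_gt (hppos x))]
    linarith [h1]
  -- Step A : deriv p ≤ c (m-2) on Iic 0
  have hBb : ∀ x ≤ (0:ℝ), deriv p x ≤ c * (m - 2) := by
    by_contra hcon
    push_neg at hcon
    obtain ⟨x2, hx2, hB2⟩ := hcon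
    have key : ∀ x ≤ x2, c * (m-2) < deriv p x := by
      by_contra hk; push_neg at hk
      obtain ⟨x0', hx0', hle'⟩ := hk
      set S : Set ℝ := {x | x ≤ x2 ∧ deriv p x ≤ c*(m-2)} with hSdef
      have hSne : S.Nonempty := ⟨x0', hx0', hle'⟩
      have hSbdd : BddAbove S := ⟨x2, fun y hy => hy.1⟩
      have hScl : IsClosed S := by
        have : S = Iic x2 ∩ (deriv p) ⁻¹' (Iic (c*(m-2))) := by
          ext y; simp [hSdef, Set.mem_setOf_eq]
        rw [this]
        exact isClosed_Iic.inter (isClosed_Iic.preimage hch.continuous)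
      set s := sSup S with hs
      have hsS : s ∈ S := hScl.csSup_mem hSne hSbdd
      have hs2 : s ≤ x2 := hsS.1
      have hslt : s < x2 := lt_of_le_of_ne hs2 (fun h => absurd (h ▸ hsS.2) (not_le.mpr hB2))
      have hgt : ∀ y, s < y → y ≤ x2 → c*(m-2) < deriv p y := by
        intro y hy1 hy2
        by_contra hy3; push_neg at hy3
        exact absurd (le_csSup hSbdd ⟨hy2, hy3⟩) (not_le.mpr hy1)
      have hanti : AntitoneOn (deriv p) (Icc s x2) := by
        apply antitoneOn_of_deriv_nonpos (convex_Icc s x2) hch.continuous.continuousOn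
          (hdh.differentiableOn)
        intro y hy
        rw [interior_Icc] at hy
        have hy0 : y ≤ (0:ℝ) := le_trans hy.2.le hx2
        rw [hdd y hy0]
        have hBy := hgt y hy.1 hy.2.le
        apply div_nonpos_of_nonpos_of_nonneg _ (hppos y).le
        apply mul_nonpos_of_nonpos_of_nonneg _ (hh0 y)
        rw [sub_nonpos]
        rw [le_div_iff₀ hm2]
        nlinarith [hBy]
      have := hanti (left_mem_Icc.mpr hs2) (right_mem_Icc.mpr hs2) hs2
      have := hsS.2
      linarith
    set B := c*(m-2) with hB
    have hBpos : 0 < B := mul_pos hc hm2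
    have h1ε : (0:ℝ) < 1 - ε := by
      have := (hrange 0).2; linarith
    set x3 := x2 - (1 - ε)/B - 1 with hx3def
    have hx3 : x3 < x2 := by
      have : 0 ≤ (1-ε)/B := le_of_lt (div_pos h1ε hBpos)
      simp only [hx3def]; linarith
    obtain ⟨ξ, hξ, hslope⟩ := exists_hasDerivAt_eq_slope p (deriv p) hx3
      hdp.continuous.continuousOn (fun y _ => (hdp y).hasDerivAt)
    have h1 : B < deriv p ξ := key ξ hξ.2.le
    have h2 : p x2 - p x3 < 1 - ε := by
      have := (hrange x2).2; have := (hrange x3).1; linarith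
    have hx32 : x2 - x3 ≠ 0 := by linarith
    have h3 : deriv p ξ * (x2 - x3) = p x2 - p x3 := by
      rw [hslope, div_mul_cancel₀ _ hx32]
    have h4 : x2 - x3 = (1-ε)/B + 1 := by simp only [hx3def]; ring
    have h5 : B * (x2 - x3) = (1-ε) + B := by
      rw [h4]; field_simp
    nlinarith [h1, h2, h3, h5, hBpos, sub_pos.mpr hx3]
  -- deriv p is monotone on Iic 0
  have hmh : MonotoneOn (deriv p) (Iic (0:ℝ)) := by
    apply monotoneOn_of_deriv_nonneg (convex_Iic 0) hch.continuous.continuousOn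
      hdh.differentiableOn
    intro y hy
    rw [interior_Iic] at hy
    rw [hdd y hy.le]
    apply div_nonneg _ (hppos y).le
    apply mul_nonneg _ (hh0 y)
    rw [sub_nonneg, div_le_iff₀ hm2]
    nlinarith [hBb y hy.le]
  -- limit of deriv p at -infty is 0
  have hhlim : Tendsto (deriv p) atBot (nhds 0) := by
    set H : ℝ → ℝ := fun t => deriv p (min t 0) with hHdef
    have hHmono : Monotone H := fun a b hab =>
      hmh (mem_Iic.mpr (min_le_right a 0)) (mem_Iic.mpr (min_le_right b 0))
        (min_le_min hab le_rfl)
    have hHbdd : BddBelow (range H) := ⟨0, by rintro y ⟨t, rfl⟩; exact hh0 _⟩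
    have hHlim := tendsto_atBot_ciInf hHmono hHbdd
    have hinf0 : (⨅ t, H t) = 0 := by
      have hge : 0 ≤ ⨅ t, H t := le_ciInf fun t => hh0 _
      rcases eq_or_lt_of_le hge with h | h
      · exact h.symm
      · exfalso
        set l := ⨅ t, H t with hldef
        have hθε : 0 < θ - ε := by linarith
        set x4 := -((θ - ε)/l) - 1 with hx4def
        have hx4 : x4 < 0 := by
          have : 0 < (θ - ε)/l := div_pos hθε h
          simp only [hx4def]; linarith
        obtain ⟨ξ, hξ, hslope⟩ := exists_hasDerivAt_eq_slope p (deriv p) hx4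
          hdp.continuous.continuousOn (fun y _ => (hdp y).hasDerivAt)
        have hl : l ≤ deriv p ξ := by
          have h6 := ciInf_le hHbdd ξ
          rw [hHdef] at h6
          simpa [min_eq_left (le_of_lt hξ.2)] using h6
        have hx40 : (0:ℝ) - x4 ≠ 0 := by linarith
        have h3 : deriv p ξ * (0 - x4) = p 0 - p x4 := by
          rw [hslope, div_mul_cancel₀ _ hx40]
        have h4 : p 0 - p x4 < θ - ε := by
          have := (hrange x4).1; rw [hp0]; linarith
        have h5 : l * (0 - x4) = (θ - ε) + l := by
          simp only [hx4def]
          field_simp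
          ring
        nlinarith [mul_le_mul_of_nonneg_right hl (by linarith : (0:ℝ) ≤ 0 - x4)]
    rw [hinf0] at hHlim
    refine hHlim.congr' ?_
    filter_upwards [eventually_le_atBot (0:ℝ)] with t ht
    rw [hHdef]; simp [min_eq_left ht]
  -- key upper bound for the logarithmic derivative factor
  have hkey2 : ∀ y : ℝ, (c - deriv p y/(m-2))/(p y) ≤ c/ε := by
    intro y
    have h1 : c - deriv p y/(m-2) ≤ c := by
      have : 0 ≤ deriv p y/(m-2) := div_nonneg (hh0 y) hm2.le
      linarith
    have h2 : ε ≤ p y := (hrange y).1.le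
    calc (c - deriv p y/(m-2))/(p y) ≤ c/(p y) :=
          (div_le_div_iff_of_pos_right (hppos y)).mpr h1
        _ ≤ c/ε := by gcongr
  set k := c/(2*θ) with hkdef
  have hkpos : 0 < k := div_pos hc (by linarith)
  set δ := c*(m-2)*ε/(2*θ) with hδdef
  have hδpos : 0 < δ := by
    apply div_pos _ (by linarith)
    positivity
  have hev : ∀ᶠ x in atBot, deriv p x < δ ∧ x ≤ (0:ℝ) :=
    (hhlim.eventually (gt_mem_nhds hδpos)).and (eventually_le_atBot 0)
  rw [eventually_atBot] at hev
  obtain ⟨x1, hx1⟩ := hev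
  have hx10 : x1 ≤ 0 := (hx1 x1 le_rfl).2
  have hδb : ∀ x ≤ x1, deriv p x ≤ δ := fun x hx => (hx1 x hx).1.le
  -- lower bound for the logarithmic derivative factor on Iic x1
  have hkey1 : ∀ y ≤ x1, k ≤ (c - deriv p y/(m-2))/(p y) := by
    intro y hy
    have ha : deriv p y ≤ δ := hδb y hy
    have haδ : deriv p y/(m-2) ≤ δ/(m-2) := by gcongr
    have hδm : δ/(m-2) = c*ε/(2*θ) := by
      rw [hδdef]; field_simp
    have hce : c*ε/(2*θ) ≤ c/2 := by
      rw [div_le_div_iff₀ (by linarith) (by norm_num)]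
      nlinarith
    have h2 : c/2 ≤ c - deriv p y/(m-2) := by
      rw [hδm] at haδ; linarith
    have hkeq : k = (c/2)/θ := by rw [hkdef]; field_simp
    rw [hkeq]
    apply div_le_div₀ (by linarith) h2 (hppos y) (hple y (le_trans hy hx10))
  -- Step D : deriv p x ≥ k (p x - ε) on Iic x1
  have hdz : ∀ x : ℝ, HasDerivAt (fun x => deriv p x - k*(p x - ε))
      (deriv (deriv p) x - k * deriv p x) x :=
    fun x => (hdh x).hasDerivAt.sub (((hdp x).hasDerivAt.sub_const ε).const_mul k)
  have hzmono : MonotoneOn (fun x => deriv p x - k*(p x - ε)) (Iic x1) := by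
    apply monotoneOn_of_deriv_nonneg (convex_Iic x1)
      (hch.continuous.sub (continuous_const.mul (hdp.continuous.sub continuous_const))).continuousOn
      (fun x _ => ((hdz x).differentiableAt).differentiableWithinAt)
    intro y hy
    rw [interior_Iic] at hy
    rw [show deriv (deriv p - (fun x => c / (2 * θ)) * (p - fun x => ε)) y = deriv (deriv p) y - k * deriv p y from (hdz y).deriv, hdd y (le_trans hy.le hx10)]
    have hk1 := hkey1 y hy.le
    have h5 : k * deriv p y ≤ ((c - deriv p y/(m-2))/(p y)) * deriv p y :=
      mul_le_mul_of_nonneg_right hk1 (hh0 y)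
    have h6 : ((c - deriv p y/(m-2))/(p y)) * deriv p y
        = (c - deriv p y/(m-2)) * deriv p y / (p y) := by ring
    linarith [h5, h6 ▸ h5]
  have hztend : Tendsto (fun x => deriv p x - k*(p x - ε)) atBot (nhds 0) := by
    have := hhlim.sub ((hbot.sub_const ε).const_mul k)
    simpa using this
  have hz : ∀ x ≤ x1, k*(p x - ε) ≤ deriv p x := by
    intro x hx
    have h7 : (0:ℝ) ≤ deriv p x - k*(p x - ε) := by
      refine le_of_tendsto hztend ?_
      filter_upwards [eventually_le_atBot x] with a ha
      exact hzmono (mem_Iic.mpr (le_trans ha hx)) (mem_Iic.mpr hx) ha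
    linarith
  -- Step E : exponential decay of p - ε with rate k
  have hdq1 : ∀ x : ℝ, HasDerivAt (fun x => (p x - ε) * Real.exp (-(k*x)))
      ((deriv p x - k*(p x - ε)) * Real.exp (-(k*x))) x := by
    intro x
    have h1 : HasDerivAt (fun y : ℝ => -(k*y)) (-k) x := by
      have h0 : HasDerivAt (fun y : ℝ => -k * y) (-k) x := by
        simpa using (hasDerivAt_id x).const_mul (-k)
      exact h0.congr_of_eventuallyEq (Filter.Eventually.of_forall fun y => by ring)
    have he := h1.exp
    have h2 := ((hdp x).hasDerivAt.sub_const ε).mul he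
    refine h2.congr_deriv ?_
    ring
  have hq1mono : MonotoneOn (fun x => (p x - ε) * Real.exp (-(k*x))) (Iic x1) := by
    refine monotoneOn_of_deriv_nonneg (convex_Iic x1) (Continuous.continuousOn (by fun_prop))
      (fun x _ => (hdq1 x).differentiableAt.differentiableWithinAt) ?_
    intro y hy
    rw [interior_Iic] at hy
    rw [(hdq1 y).deriv]
    have := hz y hy.le
    have := Real.exp_pos (-(k*y))
    nlinarith
  set C0 := (p x1 - ε) * Real.exp (-(k*x1)) with hC0def
  have hC0pos : 0 < C0 := mul_pos (by have := (hrange x1).1; linarith) (Real.exp_pos _)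
  have hE : ∀ x ≤ x1, p x - ε ≤ C0 * Real.exp (k*x) := by
    intro x hx
    have h := hq1mono (mem_Iic.mpr hx) (mem_Iic.mpr le_rfl) hx
    calc p x - ε = ((p x - ε) * Real.exp (-(k*x))) * Real.exp (k*x) := by
          rw [mul_assoc, ← Real.exp_add]; simp
      _ ≤ C0 * Real.exp (k*x) := mul_le_mul_of_nonneg_right h (Real.exp_nonneg _)
  -- upper bound: deriv p ≤ (c/ε + 1)(p - ε) on Iic 0
  have hdz2 : ∀ x : ℝ, HasDerivAt (fun x => deriv p x - (c/ε+1)*(p x - ε))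
      (deriv (deriv p) x - (c/ε+1) * deriv p x) x :=
    fun x => (hdh x).hasDerivAt.sub (((hdp x).hasDerivAt.sub_const ε).const_mul (c/ε+1))
  have hz2anti : AntitoneOn (fun x => deriv p x - (c/ε+1)*(p x - ε)) (Iic (0:ℝ)) := by
    apply antitoneOn_of_deriv_nonpos (convex_Iic 0)
      (hch.continuous.sub (continuous_const.mul (hdp.continuous.sub continuous_const))).continuousOn
      (fun x _ => (hdz2 x).differentiableAt.differentiableWithinAt)
    intro y hy
    rw [interior_Iic] at hy
    rw [show deriv (deriv p - (fun x => c / ε + 1) * (p - fun x => ε)) y = deriv (deriv p) y - (c/ε+1) * deriv p y from (hdz2 y).deriv, hdd y hy.le]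
    have hk2 := hkey2 y
    have h5 : ((c - deriv p y/(m-2))/(p y)) * deriv p y ≤ (c/ε) * deriv p y :=
      mul_le_mul_of_nonneg_right hk2 (hh0 y)
    have h6 : ((c - deriv p y/(m-2))/(p y)) * deriv p y
        = (c - deriv p y/(m-2)) * deriv p y / (p y) := by ring
    have h8 : (c/ε+1)*deriv p y = (c/ε)*deriv p y + deriv p y := by ring
    linarith [h6 ▸ h5, hh0 y]
  have hz2tend : Tendsto (fun x => deriv p x - (c/ε+1)*(p x - ε)) atBot (nhds 0) := by
    have := hhlim.sub ((hbot.sub_const ε).const_mul (c/ε+1))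
    simpa using this
  have hupper : ∀ x ≤ (0:ℝ), deriv p x ≤ (c/ε+1)*(p x - ε) := by
    intro x hx
    have h7 : deriv p x - (c/ε+1)*(p x - ε) ≤ 0 := by
      refine ge_of_tendsto hz2tend ?_
      filter_upwards [eventually_le_atBot x] with a ha
      exact hz2anti (mem_Iic.mpr (le_trans ha hx)) (mem_Iic.mpr hx) ha
    linarith
  -- the function w = p' e^{-cx/ε}
  set w : ℝ → ℝ := fun x => deriv p x * Real.exp (-(c*x/ε)) with hwdef
  have hwnn : ∀ x, 0 ≤ w x := fun x => mul_nonneg (hh0 x) (Real.exp_nonneg _)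
  have hdw : ∀ x : ℝ, HasDerivAt w
      (deriv (deriv p) x * Real.exp (-(c*x/ε))
        + deriv p x * (Real.exp (-(c*x/ε)) * (-(c/ε)))) x := by
    intro x
    have h1 : HasDerivAt (fun y : ℝ => -(c*y/ε)) (-(c/ε)) x := by
      have h0 : HasDerivAt (fun y : ℝ => -(c/ε) * y) (-(c/ε)) x := by
        simpa using (hasDerivAt_id x).const_mul (-(c/ε))
      exact h0.congr_of_eventuallyEq (Filter.Eventually.of_forall fun y => by ring)
    exact (hdh x).hasDerivAt.mul h1.exp
  have hwcont : Continuous w := by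
    rw [hwdef]
    exact hch.continuous.mul (Real.continuous_exp.comp (by fun_prop))
  have hwanti : AntitoneOn w (Iic (0:ℝ)) := by
    refine antitoneOn_of_deriv_nonpos (convex_Iic 0) hwcont.continuousOn
      (fun x _ => (hdw x).differentiableAt.differentiableWithinAt) ?_
    intro y hy
    rw [interior_Iic] at hy
    rw [(hdw y).deriv, hdd y hy.le]
    have hk2 := hkey2 y
    have hEp := Real.exp_pos (-(c*y/ε))
    have h5 : ((c - deriv p y/(m-2))/(p y)) * deriv p y ≤ (c/ε) * deriv p y :=
      mul_le_mul_of_nonneg_right hk2 (hh0 y)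
    have h6 : (c - deriv p y/(m-2)) * deriv p y / (p y) * Real.exp (-(c*y/ε))
        + deriv p y * (Real.exp (-(c*y/ε)) * (-(c/ε)))
        = (((c - deriv p y/(m-2))/(p y)) * deriv p y - (c/ε) * deriv p y)
            * Real.exp (-(c*y/ε)) := by
      ring
    rw [h6]
    exact mul_nonpos_iff.mpr (Or.inr ⟨by linarith, hEp.le⟩)
  -- exponential bound for deriv p
  set C1 := (c/ε+1)*C0 with hC1def
  have hC1pos : 0 < C1 := mul_pos (by positivity) hC0pos
  have hhE : ∀ x ≤ x1, deriv p x ≤ C1 * Real.exp (k*x) := by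
    intro x hx
    have h1 : (0:ℝ) ≤ c/ε + 1 := by positivity
    calc deriv p x ≤ (c/ε+1)*(p x - ε) := hupper x (le_trans hx hx10)
      _ ≤ (c/ε+1)*(C0 * Real.exp (k*x)) := by nlinarith [hE x hx]
      _ = C1 * Real.exp (k*x) := by rw [hC1def]; ring
  set C2 := c*C0/(ε*ε) + C1/((m-2)*ε) with hC2def
  have hC2pos : 0 < C2 := by positivity
  have hφ : ∀ x ≤ x1, c/ε - (c - deriv p x/(m-2))/(p x) ≤ C2 * Real.exp (k*x) := by
    intro x hx
    have hpx := hppos x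
    have hεp : ε ≤ p x := (hrange x).1.le
    have hid : c/ε - (c - deriv p x/(m-2))/(p x)
        = c*(p x - ε)/(ε*(p x)) + deriv p x/((m-2)*(p x)) := by
      field_simp
      ring
    rw [hid]
    have hb1 : c*(p x - ε)/(ε*(p x)) ≤ c*C0*Real.exp (k*x)/(ε*ε) := by
      apply div_le_div₀ (by positivity) ?_ (by positivity) ?_
      · nlinarith [hE x hx]
      · nlinarith
    have hb2 : deriv p x/((m-2)*(p x)) ≤ C1*Real.exp (k*x)/((m-2)*ε) := by
      apply div_le_div₀ (by positivity) ?_ (by positivity) ?_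
      · calc deriv p x ≤ C1 * Real.exp (k*x) := hhE x hx
          _ = C1*Real.exp (k*x) := by ring
      · nlinarith
    calc c*(p x - ε)/(ε*(p x)) + deriv p x/((m-2)*(p x))
        ≤ c*C0*Real.exp (k*x)/(ε*ε) + C1*Real.exp (k*x)/((m-2)*ε) := add_le_add hb1 hb2
      _ = C2 * Real.exp (k*x) := by rw [hC2def]; ring
  -- V = w * exp(Ψ) is monotone on Iic x1, hence w is bounded there
  set Ψ : ℝ → ℝ := fun x => (C2/k) * Real.exp (k*x) with hΨdef
  have hΨnn : ∀ x, 0 ≤ Ψ x := fun x => by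
    rw [hΨdef]; positivity
  have hdΨ : ∀ x : ℝ, HasDerivAt Ψ (C2 * Real.exp (k*x)) x := by
    intro x
    have h1 : HasDerivAt (fun y : ℝ => k*y) k x := by
      simpa using (hasDerivAt_id x).const_mul k
    have h2 := (h1.exp).const_mul (C2/k)
    refine h2.congr_deriv ?_
    field_simp
  have hdV : ∀ x : ℝ, HasDerivAt (fun x => w x * Real.exp (Ψ x))
      ((deriv (deriv p) x * Real.exp (-(c*x/ε))
          + deriv p x * (Real.exp (-(c*x/ε)) * (-(c/ε)))) * Real.exp (Ψ x)
        + w x * (Real.exp (Ψ x) * (C2 * Real.exp (k*x)))) x :=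
    fun x => (hdw x).mul ((hdΨ x).exp)
  have hΨcont : Continuous Ψ := by
    rw [hΨdef]
    fun_prop
  have hVmono : MonotoneOn (fun x => w x * Real.exp (Ψ x)) (Iic x1) := by
    refine monotoneOn_of_deriv_nonneg (convex_Iic x1)
      (hwcont.mul (Real.continuous_exp.comp hΨcont)).continuousOn
      (fun x _ => (hdV x).differentiableAt.differentiableWithinAt) ?_
    intro y hy
    rw [interior_Iic] at hy
    have hy0 : y ≤ (0:ℝ) := le_trans hy.le hx10
    rw [(hdV y).deriv, hdd y hy0]
    have hfact : ((c - deriv p y/(m-2)) * deriv p y / (p y) * Real.exp (-(c*y/ε))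
          + deriv p y * (Real.exp (-(c*y/ε)) * (-(c/ε)))) * Real.exp (Ψ y)
        + w y * (Real.exp (Ψ y) * (C2 * Real.exp (k*y)))
        = (deriv p y * (Real.exp (-(c*y/ε)) * Real.exp (Ψ y)))
            * ((c - deriv p y/(m-2))/(p y) - c/ε + C2 * Real.exp (k*y)) := by
      rw [hwdef]
      ring
    rw [hfact]
    apply mul_nonneg
    · exact mul_nonneg (hh0 y) (by positivity)
    · linarith [hφ y hy.le]
  have hwbdd : ∀ x ≤ x1, w x ≤ w x1 * Real.exp (Ψ x1) := by
    intro x hx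
    have h1 : w x * Real.exp (Ψ x) ≤ w x1 * Real.exp (Ψ x1) :=
      hVmono (mem_Iic.mpr hx) (mem_Iic.mpr le_rfl) hx
    nlinarith [hwnn x, Real.one_le_exp (hΨnn x)]
  -- the limit L
  set W : ℝ → ℝ := fun t => w (min t x1) with hWdef
  have hWanti : Antitone W := by
    intro a b hab
    exact hwanti (mem_Iic.mpr (le_trans (min_le_right a x1) hx10))
      (mem_Iic.mpr (le_trans (min_le_right b x1) hx10)) (min_le_min hab le_rfl)
  have hWbddA : BddAbove (range W) := ⟨w x1 * Real.exp (Ψ x1), by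
    rintro y ⟨t, rfl⟩
    exact hwbdd _ (min_le_right t x1)⟩
  have hWlim := tendsto_atBot_ciSup hWanti hWbddA
  set L := ⨆ t, W t with hLdef
  obtain ⟨ξ, hξ, hslope⟩ := exists_hasDerivAt_eq_slope p (deriv p)
    (by linarith : x1 - 1 < x1) hdp.continuous.continuousOn (fun y _ => (hdp y).hasDerivAt)
  have hdξ : 0 < deriv p ξ := by
    rw [hslope]
    apply div_pos (sub_pos.mpr (hmono (by linarith : x1 - 1 < x1))) (by norm_num)
  have hLpos : 0 < L := by
    have h1 : W ξ ≤ L := le_ciSup hWbddA ξ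
    have h2 : 0 < W ξ := by
      rw [hWdef]
      simp only [min_eq_left hξ.2.le]
      exact mul_pos hdξ (Real.exp_pos _)
    linarith
  have hwlim : Tendsto w atBot (nhds L) := by
    refine hWlim.congr' ?_
    filter_upwards [eventually_le_atBot x1] with t ht
    rw [hWdef]
    simp [min_eq_left ht]
  refine ⟨⟨L, hLpos, hwlim⟩, ?_⟩
  -- Part 2
  have hev2 : ∀ᶠ x in atBot, w x < 2*L := hwlim.eventually (gt_mem_nhds (by linarith))
  rw [eventually_atBot] at hev2
  obtain ⟨xb, hxb⟩ := hev2
  set M := 2*L*ε/c with hMdef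
  have hMpos : 0 < M := by positivity
  have hdq : ∀ x : ℝ, HasDerivAt (fun x => p x - M * Real.exp (c*x/ε))
      (deriv p x - M * (Real.exp (c*x/ε) * (c/ε))) x := by
    intro x
    have h1 : HasDerivAt (fun y : ℝ => c*y/ε) (c/ε) x := by
      have h0 : HasDerivAt (fun y : ℝ => (c/ε) * y) (c/ε) x := by
        simpa using (hasDerivAt_id x).const_mul (c/ε)
      exact h0.congr_of_eventuallyEq (Filter.Eventually.of_forall fun y => by ring)
    exact (hdp x).hasDerivAt.sub ((h1.exp).const_mul M)
  have hqanti : AntitoneOn (fun x => p x - M * Real.exp (c*x/ε)) (Iic xb) := by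
    refine antitoneOn_of_deriv_nonpos (convex_Iic xb) (Continuous.continuousOn (by fun_prop))
      (fun x _ => (hdq x).differentiableAt.differentiableWithinAt) ?_
    intro y hy
    rw [interior_Iic] at hy
    rw [(hdq y).deriv]
    have hwy : w y < 2*L := hxb y hy.le
    have hco : deriv p y = w y * Real.exp (c*y/ε) := by
      rw [hwdef]
      simp only
      rw [mul_assoc, ← Real.exp_add]
      simp
    have hM2 : M * (Real.exp (c*y/ε) * (c/ε)) = 2*L*Real.exp (c*y/ε) := by
      rw [hMdef]
      field_simp
    rw [hco, hM2]
    have := Real.exp_pos (c*y/ε)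
    nlinarith
  have hqtend : Tendsto (fun x => p x - M * Real.exp (c*x/ε)) atBot (nhds ε) := by
    have hlin : Tendsto (fun x : ℝ => c*x/ε) atBot atBot := by
      apply Tendsto.atBot_div_const hε0
      exact Tendsto.const_mul_atBot hc tendsto_id
    have he : Tendsto (fun x : ℝ => M * Real.exp (c*x/ε)) atBot (nhds 0) := by
      have := (Real.tendsto_exp_atBot.comp hlin).const_mul M
      simpa using this
    have := hbot.sub he
    simpa using this
  have hfinal : ∀ x ≤ xb, p x - ε ≤ M * Real.exp (c*x/ε) := by
    intro x hx
    have h7 : p x - M * Real.exp (c*x/ε) ≤ ε := by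
      refine ge_of_tendsto hqtend ?_
      filter_upwards [eventually_le_atBot x] with a ha
      exact hqanti (mem_Iic.mpr (le_trans ha hx)) (mem_Iic.mpr hx) ha
    linarith
  exact ⟨M, hMpos, xb, fun x hx => ⟨sub_pos.mpr (hrange x).1, hfinal x hx⟩⟩
end
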